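/- The Euclidean projection of a point u ∈ ℝᴷ onto the set {x ∈ ℝᴷ : x ≥ 0, ‖x‖ ≤ r} (intersection of a ball of radius r > 0 centered at 0 with the nonnegative orthant) equals (r / max(‖[u]₊‖, r)) · [u]₊, where [u]₊ is the componentwise positive part of u. -/

import Mathlib

open RealInnerProductSpace

theorem projection_ball_nonneg_orthant
    (K : ℕ) (r : ℝ) (hr : 0 < r) (u : EuclideanSpace ℝ (Fin K)) :
    letI upos : EuclideanSpace ℝ (Fin K) := WithLp.toLp 2 (fun i => max (u i) 0)
    letI p : EuclideanSpace ℝ (Fin K) := (r / max ‖upos‖ r) • upos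
    (∀ i, 0 ≤ p i) ∧ ‖p‖ ≤ r ∧
      ∀ x : EuclideanSpace ℝ (Fin K), (∀ i, 0 ≤ x i) → ‖x‖ ≤ r →
        ‖p - u‖ ≤ ‖x - u‖ := by
  set upos : EuclideanSpace ℝ (Fin K) := WithLp.toLp 2 (fun i => max (u i) 0) with hup
  set p : EuclideanSpace ℝ (Fin K) := (r / max ‖upos‖ r) • upos with hpdef
  have hupos : ∀ i, upos i = max (u i) 0 := fun i => rfl
  have hm : 0 < max ‖upos‖ r := lt_of_lt_of_le hr (le_max_right _ _)
  have hc0 : 0 ≤ r / max ‖upos‖ r := div_nonneg hr.le hm.le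
  have hc1 : r / max ‖upos‖ r ≤ 1 := by
    rw [div_le_one hm]; exact le_max_right _ _
  have hp_apply : ∀ i, p i = (r / max ‖upos‖ r) * upos i := fun i => rfl
  refine ⟨fun i => by rw [hp_apply]; exact mul_nonneg hc0 (le_max_right _ _), ?_, ?_⟩
  · have hn : ‖p‖ = (r / max ‖upos‖ r) * ‖upos‖ := by
      show ‖(r / max ‖upos‖ r) • upos‖ = _
      rw [norm_smul, Real.norm_of_nonneg hc0]
    rw [hn, div_mul_eq_mul_div, div_le_iff₀ hm]
    exact mul_le_mul_of_nonneg_left (le_max_left _ _) hr.le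
  · intro x hx hxr
    have key : ∀ y : EuclideanSpace ℝ (Fin K),
        ‖y - u‖ ^ 2 = ‖y - upos‖ ^ 2 + 2 * (inner ℝ (y - upos) (upos - u) : ℝ) + ‖upos - u‖ ^ 2 := by
      intro y
      rw [show y - u = (y - upos) + (upos - u) by abel, norm_add_sq_real]
    have hinner_eq : ∀ y : EuclideanSpace ℝ (Fin K),
        (inner ℝ (y - upos) (upos - u) : ℝ) = ∑ i, (y i - upos i) * (upos i - u i) := by
      intro y
      rw [PiLp.inner_apply]
      simp [RCLike.inner_apply, mul_comm]
    have hx_inner : 0 ≤ (inner ℝ (x - upos) (upos - u) : ℝ) := by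
      rw [hinner_eq]
      apply Finset.sum_nonneg
      intro i _
      rcases le_or_gt 0 (u i) with h | h
      · rw [hupos, max_eq_left h]; simp
      · rw [hupos, max_eq_right h.le]
        have := hx i
        nlinarith
    have hp_inner : (inner ℝ (p - upos) (upos - u) : ℝ) = 0 := by
      rw [hinner_eq]
      apply Finset.sum_eq_zero
      intro i _
      rcases le_or_gt 0 (u i) with h | h
      · rw [hupos, max_eq_left h]; simp
      · rw [hp_apply, hupos, max_eq_right h.le]; simp
    have hnorm : ‖p - upos‖ ≤ ‖x - upos‖ := by
      rcases le_or_gt ‖upos‖ r with h | h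
      · have : p = upos := by
          show (r / max ‖upos‖ r) • upos = upos
          rw [max_eq_right h, div_self hr.ne', one_smul]
        rw [this, sub_self, norm_zero]
        exact norm_nonneg _
      · have hmax : max ‖upos‖ r = ‖upos‖ := max_eq_left h.le
        have hps : p - upos = (r / ‖upos‖ - 1) • upos := by
          show (r / max ‖upos‖ r) • upos - upos = _
          rw [hmax, sub_smul, one_smul]
        have hnp : ‖p - upos‖ = ‖upos‖ - r := by
          rw [hps, norm_smul, Real.norm_eq_abs, abs_of_nonpos (by
            rw [sub_nonpos, div_le_one (hr.trans h)]; exact h.le)]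
          have hne : ‖upos‖ ≠ 0 := (hr.trans h).ne'
          field_simp
          ring
        rw [hnp]
        calc ‖upos‖ - r ≤ ‖upos‖ - ‖x‖ := by linarith
          _ ≤ ‖upos - x‖ := norm_sub_norm_le _ _
          _ = ‖x - upos‖ := norm_sub_rev _ _
    have hsq : ‖p - u‖ ^ 2 ≤ ‖x - u‖ ^ 2 := by
      rw [key p, key x, hp_inner]
      have h1 : ‖p - upos‖ ^ 2 ≤ ‖x - upos‖ ^ 2 := by
        have := norm_nonneg (p - upos)
        nlinarith
      linarith
    nlinarith [norm_nonneg (p - u), norm_nonneg (x - u)]
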